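/- arXiv:0903.1174 — 2 statements merged into one kernel-verified Lean document; each statement's English description precedes it below -/
import Mathlib

section
/- Let 0 ≤ s < t with t - s > 1 and let u > 0. Then for all r ∈ [0, u], q_{s,t}(r)·q_{s,t}(u - r) ≤ (t - s)·q_{s,t}(u), where q_{s,t}(v) = (e^{-sv} - e^{-tv})/(1 - e^{-v}) for v ≠ 0 and q_{s,t}(0) = t - s. -/
noncomputable def q (s t v : ℝ) : ℝ :=
  if v = 0 then t - s else (Real.exp (-s * v) - Real.exp (-t * v)) / (1 - Real.exp (-v))

open Real Set Filter

-- sinh superhomogeneity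
lemma sinh_superhom {n : ℝ} (hn : 1 ≤ n) {y : ℝ} (hy : 0 ≤ y) :
    n * Real.sinh y ≤ Real.sinh (n * y) := by
  have key : MonotoneOn (fun y => Real.sinh (n * y) - n * Real.sinh y) (Set.Ici 0) := by
    apply monotoneOn_of_hasDerivWithinAt_nonneg (convex_Ici 0)
      (f' := fun y => Real.cosh (n * y) * n - n * Real.cosh y)
    · fun_prop
    · intro x _
      have h1 : HasDerivAt (fun y => Real.sinh (n * y)) (Real.cosh (n * x) * n) x :=
        (Real.hasDerivAt_sinh (n * x)).comp x (by simpa using (hasDerivAt_id x).const_mul n)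
      exact ((h1.sub ((Real.hasDerivAt_sinh x).const_mul n)).hasDerivWithinAt)
    · intro x hx
      rw [interior_Ici] at hx
      have hx0 : (0:ℝ) < x := hx
      have : Real.cosh x ≤ Real.cosh (n * x) := by
        rw [Real.cosh_le_cosh, abs_of_pos hx0, abs_of_pos (by nlinarith)]
        nlinarith
      nlinarith
  have h0 := key (Set.self_mem_Ici) hy hy
  simpa using h0

lemma key_ineq {n : ℝ} (hn : 1 ≤ n) {x : ℝ} (hx : 0 < x) :
    n ^ 2 * Real.exp (n * x) * (Real.exp x - 1) ^ 2
      ≤ Real.exp x * (Real.exp (n * x) - 1) ^ 2 := by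
  have ha1 : 1 < Real.exp (x / 2) := Real.one_lt_exp_iff.mpr (by positivity)
  have hb1 : 1 < Real.exp (n * x / 2) := Real.one_lt_exp_iff.mpr (by nlinarith)
  set a := Real.exp (x / 2) with ha
  set b := Real.exp (n * x / 2) with hb
  have ha0 : (0:ℝ) < a := lt_trans one_pos ha1
  have hb0 : (0:ℝ) < b := lt_trans one_pos hb1
  have hsinh := sinh_superhom hn (le_of_lt (half_pos hx))
  rw [Real.sinh_eq, Real.sinh_eq] at hsinh
  have h2 : n * (a - a⁻¹) ≤ b - b⁻¹ := by
    have e1 : Real.exp (-(x/2)) = a⁻¹ := by rw [ha, ← Real.exp_neg]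
    have e2 : Real.exp (-(n * (x/2))) = b⁻¹ := by
      rw [hb, ← Real.exp_neg]; ring_nf
    have e3 : Real.exp (n * (x/2)) = b := by rw [hb]; ring_nf
    rw [e1, e2, e3] at hsinh
    linarith
  have hexpx : Real.exp x = a ^ 2 := by rw [ha, sq, ← Real.exp_add]; ring_nf
  have hexpnx : Real.exp (n * x) = b ^ 2 := by rw [hb, sq, ← Real.exp_add]; ring_nf
  have expand1 : n * (a - a⁻¹) * (a * b) = n * ((a ^ 2 - 1) * b) := by
    field_simp
  have expand2 : (b - b⁻¹) * (a * b) = (b ^ 2 - 1) * a := by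
    field_simp
  have h3 : n * (a - a⁻¹) * (a * b) ≤ (b - b⁻¹) * (a * b) :=
    mul_le_mul_of_nonneg_right h2 (by positivity)
  rw [expand1, expand2] at h3
  have h5 : 0 ≤ n * ((a ^ 2 - 1) * b) :=
    mul_nonneg (by linarith) (mul_nonneg (by nlinarith) hb0.le)
  rw [hexpx, hexpnx]
  nlinarith [mul_self_le_mul_self h5 h3]

lemma D_mono {n : ℝ} (hn : 1 ≤ n) :
    MonotoneOn (fun w => n * (Real.exp (n * w) - 1)⁻¹ - (Real.exp w - 1)⁻¹) (Set.Ioi 0) := by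
  have hder : ∀ x ∈ Set.Ioi (0:ℝ),
      HasDerivAt (fun w => n * (Real.exp (n * w) - 1)⁻¹ - (Real.exp w - 1)⁻¹)
        (n * (-(Real.exp (n * x) * n) / (Real.exp (n * x) - 1) ^ 2)
          - (-(Real.exp x) / (Real.exp x - 1) ^ 2)) x := by
    intro x hx
    have hx0 : (0:ℝ) < x := hx
    have h1 : (1:ℝ) < Real.exp (n * x) := Real.one_lt_exp_iff.mpr (by nlinarith)
    have h2 : (1:ℝ) < Real.exp x := Real.one_lt_exp_iff.mpr hx0
    have d1 : HasDerivAt (fun w => Real.exp (n * w) - 1) (Real.exp (n * x) * n) x := by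
      simpa using ((Real.hasDerivAt_exp (n * x)).comp x
        (by simpa using (hasDerivAt_id x).const_mul n)).sub_const 1
    have d2 : HasDerivAt (fun w => Real.exp w - 1) (Real.exp x) x := by
      simpa using (Real.hasDerivAt_exp x).sub_const 1
    exact ((d1.inv (by nlinarith)).const_mul n).sub (d2.inv (by nlinarith))
  apply monotoneOn_of_hasDerivWithinAt_nonneg (convex_Ioi 0)
    (f' := fun x => n * (-(Real.exp (n * x) * n) / (Real.exp (n * x) - 1) ^ 2)
      - (-(Real.exp x) / (Real.exp x - 1) ^ 2))
  · exact fun x hx => (hder x hx).continuousAt.continuousWithinAt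
  · exact fun x hx => (hder x (by rwa [interior_Ioi] at hx)).hasDerivWithinAt
  · intro x hx
    rw [interior_Ioi] at hx
    have hx0 : (0:ℝ) < x := hx
    have h1 : (1:ℝ) < Real.exp (n * x) := Real.one_lt_exp_iff.mpr (by nlinarith)
    have h2 : (1:ℝ) < Real.exp x := Real.one_lt_exp_iff.mpr hx0
    have key := key_ineq hn hx0
    rw [sub_nonneg, mul_div_assoc', div_le_div_iff₀ (pow_pos (by linarith : (0:ℝ) < Real.exp x - 1) 2) (pow_pos (by linarith : (0:ℝ) < Real.exp (n*x) - 1) 2)]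
    nlinarith [key]

lemma q0_eq {n w : ℝ} (hw : w ≠ 0) :
    q 0 n w = (1 - Real.exp (-(n * w))) / (1 - Real.exp (-w)) := by
  simp only [q, if_neg hw, neg_mul, neg_zero, zero_mul, Real.exp_zero]

lemma q0_pos {n : ℝ} (hn : 0 < n) {w : ℝ} (hw : 0 ≤ w) : 0 < q 0 n w := by
  rcases eq_or_lt_of_le hw with h | h
  · simp [q, ← h, hn]
  · rw [q0_eq (ne_of_gt h)]
    apply div_pos <;> simp only [sub_pos, Real.exp_lt_one_iff] <;> nlinarith

lemma q0_zero {n : ℝ} : q 0 n 0 = n := by simp [q]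

lemma log_q0_hasDeriv {n : ℝ} (hn : 1 ≤ n) {x : ℝ} (hx : 0 < x) :
    HasDerivAt (fun w => Real.log (q 0 n w))
      (n * (Real.exp (n * x) - 1)⁻¹ - (Real.exp x - 1)⁻¹) x := by
  have hn0 : 0 < n := lt_of_lt_of_le one_pos hn
  have hne1 : (1:ℝ) - Real.exp (-(n * x)) ≠ 0 := by
    have : Real.exp (-(n * x)) < 1 := Real.exp_lt_one_iff.mpr (by nlinarith)
    linarith
  have hne2 : (1:ℝ) - Real.exp (-x) ≠ 0 := by
    have : Real.exp (-x) < 1 := Real.exp_lt_one_iff.mpr (by linarith)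
    linarith
  have d1 : HasDerivAt (fun w => (1:ℝ) - Real.exp (-(n * w))) (n * Real.exp (-(n * x))) x := by
    have inner : HasDerivAt (fun w : ℝ => -(n * w)) (-n) x := by
      simpa using ((hasDerivAt_id x).const_mul n).fun_neg
    simpa [mul_comm] using (((Real.hasDerivAt_exp (-(n * x))).comp x inner).const_sub 1)
  have d2 : HasDerivAt (fun w => (1:ℝ) - Real.exp (-w)) (Real.exp (-x)) x := by
    have inner : HasDerivAt (fun w : ℝ => -w) (-1 : ℝ) x := (hasDerivAt_id x).neg
    simpa using (((Real.hasDerivAt_exp (-x)).comp x inner).const_sub 1)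
  have L := (d1.log hne1).sub (d2.log hne2)
  have e1 : n * Real.exp (-(n * x)) / (1 - Real.exp (-(n * x)))
      = n * (Real.exp (n * x) - 1)⁻¹ := by
    have hfac : (1:ℝ) - Real.exp (-(n * x))
        = Real.exp (-(n * x)) * (Real.exp (n * x) - 1) := by
      rw [mul_sub, mul_one, ← Real.exp_add]; simp
    rw [hfac, mul_comm n, mul_div_mul_left _ _ (Real.exp_pos _).ne', div_eq_mul_inv]
  have e2 : Real.exp (-x) / (1 - Real.exp (-x)) = (Real.exp x - 1)⁻¹ := by
    have hfac : (1:ℝ) - Real.exp (-x) = Real.exp (-x) * (Real.exp x - 1) := by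
      rw [mul_sub, mul_one, ← Real.exp_add]; simp
    rw [hfac, div_mul_eq_div_div, div_self (Real.exp_pos (-x)).ne', one_div]
  rw [e1, e2] at L
  -- transfer to log (q 0 n ·) by local equality
  apply L.congr_of_eventuallyEq
  have hmem : Set.Ioi (0:ℝ) ∈ nhds x := (isOpen_Ioi).mem_nhds hx
  filter_upwards [hmem] with w hw
  rw [q0_eq (ne_of_gt hw)]
  rw [Real.log_div ?h1 ?h2]
  case h1 =>
    have : Real.exp (-(n * w)) < 1 := Real.exp_lt_one_iff.mpr (by nlinarith [Set.mem_Ioi.mp hw])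
    linarith
  case h2 =>
    have : Real.exp (-w) < 1 := Real.exp_lt_one_iff.mpr (by simpa using Set.mem_Ioi.mp hw)
    linarith
  rfl

lemma slope_tendsto (c : ℝ) :
    Tendsto (fun w => (1 - Real.exp (-(c * w))) / w) (nhdsWithin 0 {(0:ℝ)}ᶜ) (nhds c) := by
  have d : HasDerivAt (fun w : ℝ => 1 - Real.exp (-(c * w))) c 0 := by
    have inner : HasDerivAt (fun w : ℝ => -(c * w)) (-c) (0:ℝ) := by
      simpa using ((hasDerivAt_id (0:ℝ)).const_mul c).fun_neg
    simpa using (((Real.hasDerivAt_exp (-(c * 0))).comp 0 inner).const_sub 1)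
  have := hasDerivAt_iff_tendsto_slope.mp d
  apply this.congr
  intro w
  simp [slope_def_field]

lemma q0_contWithin {n : ℝ} (hn : 0 < n) :
    ContinuousWithinAt (q 0 n) (Set.Ici 0) 0 := by
  rw [← continuousWithinAt_diff_self, Set.Ici_sdiff_left]
  unfold ContinuousWithinAt
  rw [q0_zero]
  have hdiv : Tendsto (fun w => ((1 - Real.exp (-(n * w))) / w) / ((1 - Real.exp (-(1 * w))) / w))
      (nhdsWithin 0 {(0:ℝ)}ᶜ) (nhds (n / 1)) :=
    (slope_tendsto n).div (slope_tendsto 1) one_ne_zero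
  rw [div_one] at hdiv
  have hdiv' := hdiv.mono_left
    (nhdsWithin_mono 0 (fun w (hw : w ∈ Set.Ioi 0) => (ne_of_gt hw : w ≠ 0)))
  apply hdiv'.congr'
  filter_upwards [self_mem_nhdsWithin] with w hw
  have hw0 : (0:ℝ) < w := hw
  have hden : (1:ℝ) - Real.exp (-w) ≠ 0 := by
    have : Real.exp (-w) < 1 := Real.exp_lt_one_iff.mpr (by linarith)
    linarith
  rw [q0_eq (ne_of_gt hw0), one_mul]
  field_simp

lemma logq0_convex {n : ℝ} (hn : 1 < n) :
    ConvexOn ℝ (Set.Ici 0) (fun w => Real.log (q 0 n w)) := by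
  have hn0 : (0:ℝ) < n := lt_trans one_pos hn
  apply MonotoneOn.convexOn_of_deriv (convex_Ici 0)
  · intro x hx
    rcases eq_or_lt_of_le (Set.mem_Ici.mp hx) with h | h
    · subst h
      exact (Real.continuousAt_log (by rw [q0_zero]; exact hn0.ne')).comp_continuousWithinAt
        (q0_contWithin hn0)
    · exact (log_q0_hasDeriv hn.le h).continuousAt.continuousWithinAt
  · rw [interior_Ici]
    exact fun x hx => (log_q0_hasDeriv hn.le hx).differentiableAt.differentiableWithinAt
  · rw [interior_Ici]
    intro a ha b hb hab
    rw [(log_q0_hasDeriv hn.le ha).deriv, (log_q0_hasDeriv hn.le hb).deriv]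
    exact D_mono hn.le ha hb hab

lemma q0_mul_le {n : ℝ} (hn : 1 < n) {a b : ℝ} (ha : 0 ≤ a) (hb : 0 ≤ b) :
    q 0 n a * q 0 n b ≤ n * q 0 n (a + b) := by
  have hn0 : (0:ℝ) < n := lt_trans one_pos hn
  rcases eq_or_lt_of_le ha with h | ha'
  · rw [← h, q0_zero, zero_add]
  · rcases eq_or_lt_of_le hb with h | hb'
    · rw [← h, q0_zero, add_zero]
      rw [mul_comm]
    · have hc : 0 < a + b := by linarith
      have hcx := logq0_convex hn
      have hac : a / (a + b) ≥ 0 := by positivity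
      have hbc : b / (a + b) ≥ 0 := by positivity
      have hsum : a / (a + b) + b / (a + b) = 1 := by field_simp
      have h1 := hcx.2 (Set.mem_Ici.mpr hc.le) (Set.self_mem_Ici) hac hbc hsum
      have h2 := hcx.2 (Set.mem_Ici.mpr hc.le) (Set.self_mem_Ici) hbc hac (by linarith)
      simp only [smul_eq_mul] at h1 h2
      have ea : a / (a + b) * (a + b) = a := by field_simp
      have eb : b / (a + b) * (a + b) = b := by field_simp
      rw [mul_zero, add_zero, ea, q0_zero] at h1
      rw [mul_zero, add_zero, eb, q0_zero] at h2
      have hlog : Real.log (q 0 n a) + Real.log (q 0 n b)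
          ≤ Real.log (q 0 n (a + b)) + Real.log n := by
        have : a / (a + b) * Real.log (q 0 n (a + b)) + b / (a + b) * Real.log (q 0 n (a + b))
            = Real.log (q 0 n (a + b)) := by
          rw [← add_mul, hsum, one_mul]
        have this2 : b / (a + b) * Real.log n + a / (a + b) * Real.log n = Real.log n := by
          rw [← add_mul, add_comm, hsum, one_mul]
        linarith
      have hqa := q0_pos hn0 ha
      have hqb := q0_pos hn0 hb
      have hqc := q0_pos hn0 hc.le
      calc q 0 n a * q 0 n b
          = Real.exp (Real.log (q 0 n a) + Real.log (q 0 n b)) := by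
            rw [Real.exp_add, Real.exp_log hqa, Real.exp_log hqb]
        _ ≤ Real.exp (Real.log (q 0 n (a + b)) + Real.log n) := Real.exp_le_exp.mpr hlog
        _ = n * q 0 n (a + b) := by
            rw [Real.exp_add, Real.exp_log hqc, Real.exp_log hn0, mul_comm]


theorem q_convolution_le (s t u : ℝ) (hs : 0 ≤ s) (hst : s < t) (h1 : 1 < t - s)
    (hu : 0 < u) (r : ℝ) (hr : r ∈ Set.Icc 0 u) :
    q s t r * q s t (u - r) ≤ (t - s) * q s t u := by
  obtain ⟨hr0, hru⟩ := hr
  set n := t - s with hn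
  have qfact : ∀ v : ℝ, q s t v = Real.exp (-s * v) * q 0 n v := by
    intro v
    by_cases hv : v = 0
    · simp [q, hv, hn]
    · rw [q0_eq hv]
      simp only [q, if_neg hv]
      rw [mul_div_assoc']
      congr 1
      rw [mul_sub, mul_one, ← Real.exp_add]
      congr 1
      rw [hn]; ring
  have hb : 0 ≤ u - r := by linarith
  have key := q0_mul_le h1 hr0 hb
  rw [show r + (u - r) = u by ring] at key
  rw [qfact r, qfact (u - r), qfact u]
  have hexp : Real.exp (-s * r) * Real.exp (-s * (u - r)) = Real.exp (-s * u) := by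
    rw [← Real.exp_add]; congr 1; ring
  calc Real.exp (-s*r) * q 0 n r * (Real.exp (-s*(u-r)) * q 0 n (u-r))
      = Real.exp (-s*u) * (q 0 n r * q 0 n (u-r)) := by rw [← hexp]; ring
    _ ≤ Real.exp (-s*u) * (n * q 0 n u) :=
        mul_le_mul_of_nonneg_left key (Real.exp_nonneg _)
    _ = n * (Real.exp (-s*u) * q 0 n u) := by ring
end

section
/- Let 0 ≤ s < t with t - s < 1 and let u > 0. Then for all r ∈ [0, u], q_{s,t}(r)·q_{s,t}(u - r) ≥ (t - s)·q_{s,t}(u), where q_{s,t}(v) = (e^{-sv} - e^{-tv})/(1 - e^{-v}) for v ≠ 0 and q_{s,t}(0) = t - s. -/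
namespace QAux

open Real Set

lemma one_sub_exp_neg_pos {p : ℝ} (hp : 0 < p) : 0 < 1 - Real.exp (-p) := by
  have : Real.exp (-p) < 1 := by
    rw [Real.exp_lt_one_iff]; linarith
  linarith

/-- sinh (a*x) ≤ a * sinh x for a ∈ [0,1], x ≥ 0. -/
lemma sinh_mul_le {a x : ℝ} (ha0 : 0 ≤ a) (ha1 : a ≤ 1) (hx : 0 ≤ x) :
    Real.sinh (a * x) ≤ a * Real.sinh x := by
  set h : ℝ → ℝ := fun y => a * Real.sinh y - Real.sinh (a * y) with hh
  have hd : ∀ y : ℝ, HasDerivAt h (a * Real.cosh y - Real.cosh (a * y) * a) y := by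
    intro y
    have h1 : HasDerivAt (fun y : ℝ => a * y) a y := by
      simpa using (hasDerivAt_id y).const_mul a
    exact ((Real.hasDerivAt_sinh y).const_mul a).sub ((Real.hasDerivAt_sinh (a*y)).comp y h1)
  have hmono : MonotoneOn h (Set.Ici 0) := by
    apply monotoneOn_of_deriv_nonneg (convex_Ici 0)
      (fun y _ => ((hd y).differentiableAt).continuousAt.continuousWithinAt)
      (fun y _ => ((hd y).differentiableAt).differentiableWithinAt)
    intro y hy
    rw [interior_Ici] at hy
    rw [(hd y).deriv]
    have : Real.cosh (a * y) ≤ Real.cosh y := by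
      rw [Real.cosh_le_cosh]
      rw [abs_of_nonneg (le_of_lt (show (0:ℝ) < y from hy)), abs_of_nonneg (mul_nonneg ha0 (le_of_lt (show (0:ℝ) < y from hy)))]
      exact mul_le_of_le_one_left (le_of_lt hy) ha1
    nlinarith
  have := hmono (Set.self_mem_Ici) (Set.mem_Ici.mpr hx) hx
  simp only [hh, Real.sinh_zero, mul_zero, Real.sinh_zero, sub_zero] at this
  linarith [this]


lemma one_sub_exp_eq (x : ℝ) :
    1 - Real.exp (-x) = Real.exp (-(x/2)) * (2 * Real.sinh (x/2)) := by
  rw [Real.sinh_eq]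
  have h1 : Real.exp (-(x/2)) * Real.exp (x/2) = 1 := by
    rw [← Real.exp_add]; norm_num
  have h2 : Real.exp (-(x/2))^2 = Real.exp (-x) := by
    rw [sq, ← Real.exp_add]; ring_nf
  linear_combination h2 - h1

lemma sinh_pos' {x : ℝ} (hx : 0 < x) : 0 < Real.sinh x := by
  rw [← Real.sinh_zero]
  exact Real.sinh_lt_sinh.mpr hx

/-- The key second-derivative inequality. -/
lemma key_ineq {a p : ℝ} (ha0 : 0 < a) (ha1 : a ≤ 1) (hp : 0 < p) :
    Real.exp (-p) / (1 - Real.exp (-p))^2 ≤ a^2 * Real.exp (-(a*p)) / (1 - Real.exp (-(a*p)))^2 := by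
  have hsp : 0 < Real.sinh (p/2) := sinh_pos' (by linarith)
  have hsap : 0 < Real.sinh (a*p/2) := sinh_pos' (by positivity)
  have hkey : Real.sinh (a*p/2) ≤ a * Real.sinh (p/2) := by
    have := sinh_mul_le (le_of_lt ha0) ha1 (le_of_lt (half_pos hp))
    rwa [show a * (p/2) = a*p/2 by ring] at this
  have e1 : Real.exp (-(p/2))^2 = Real.exp (-p) := by
    rw [sq, ← Real.exp_add]; ring_nf
  have e2 : Real.exp (-(a*p/2))^2 = Real.exp (-(a*p)) := by
    rw [sq, ← Real.exp_add]; ring_nf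
  have hep := Real.exp_pos (-p)
  have heap := Real.exp_pos (-(a*p))
  have d1 : (Real.exp (-(p/2)) * (2*Real.sinh (p/2)))^2
      = Real.exp (-p) * (4 * Real.sinh (p/2)^2) := by rw [mul_pow, e1]; ring
  have d2 : (Real.exp (-(a*p/2)) * (2*Real.sinh (a*p/2)))^2
      = Real.exp (-(a*p)) * (4 * Real.sinh (a*p/2)^2) := by rw [mul_pow, e2]; ring
  rw [one_sub_exp_eq p, one_sub_exp_eq (a*p), d1, d2,
    div_le_div_iff₀ (by positivity) (by positivity)]
  have hsq : Real.sinh (a*p/2)^2 ≤ a^2 * Real.sinh (p/2)^2 := by nlinarith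
  nlinarith [mul_le_mul_of_nonneg_left hsq (le_of_lt (mul_pos hep heap))]


lemma hasDerivAt_log_one_sub_exp {c p : ℝ} (hc : 0 < c) (hp : 0 < p) :
    HasDerivAt (fun p => Real.log (1 - Real.exp (-(c*p))))
      (c * Real.exp (-(c*p)) / (1 - Real.exp (-(c*p)))) p := by
  have hne : 1 - Real.exp (-(c*p)) ≠ 0 := ne_of_gt (one_sub_exp_neg_pos (mul_pos hc hp))
  have h1 : HasDerivAt (fun p : ℝ => -(c*p)) (-c) p := by
    exact (((hasDerivAt_id p).const_mul c).neg).congr_deriv (by simp)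
  have h2 : HasDerivAt (fun p : ℝ => Real.exp (-(c*p))) (Real.exp (-(c*p)) * (-c)) p := h1.exp
  have h3 : HasDerivAt (fun p : ℝ => 1 - Real.exp (-(c*p))) (Real.exp (-(c*p)) * c) p := by
    simpa using h2.const_sub 1
  have := h3.log hne
  convert this using 1
  ring

lemma hasDerivAt_ratio {c p : ℝ} (hc : 0 < c) (hp : 0 < p) :
    HasDerivAt (fun p => c * Real.exp (-(c*p)) / (1 - Real.exp (-(c*p))))
      (-(c^2 * Real.exp (-(c*p)) / (1 - Real.exp (-(c*p)))^2)) p := by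
  have hpos : 0 < 1 - Real.exp (-(c*p)) := one_sub_exp_neg_pos (mul_pos hc hp)
  have h1 : HasDerivAt (fun p : ℝ => -(c*p)) (-c) p := by
    exact (((hasDerivAt_id p).const_mul c).neg).congr_deriv (by simp)
  have h2 : HasDerivAt (fun p : ℝ => Real.exp (-(c*p))) (Real.exp (-(c*p)) * (-c)) p := h1.exp
  have hnum : HasDerivAt (fun p : ℝ => c * Real.exp (-(c*p)))
      (c * (Real.exp (-(c*p)) * (-c))) p := h2.const_mul c
  have hden : HasDerivAt (fun p : ℝ => 1 - Real.exp (-(c*p))) (Real.exp (-(c*p)) * c) p := by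
    simpa using h2.const_sub 1
  have := hnum.div hden (ne_of_gt hpos)
  refine this.congr_deriv ?_
  ring


noncomputable def fv (a p : ℝ) : ℝ :=
  if p = 0 then a else (1 - Real.exp (-(a*p))) / (1 - Real.exp (-p))

lemma fv_pos {a p : ℝ} (ha0 : 0 < a) (hp : 0 ≤ p) : 0 < fv a p := by
  rcases eq_or_lt_of_le hp with h | h
  · rw [← h]; simpa [fv] using ha0
  · rw [fv, if_neg (ne_of_gt h)]
    exact div_pos (one_sub_exp_neg_pos (mul_pos ha0 h)) (one_sub_exp_neg_pos h)

lemma slope_lim (c : ℝ) :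
    Filter.Tendsto (fun p : ℝ => (1 - Real.exp (-(c*p)))/p)
      (nhdsWithin 0 {(0:ℝ)}ᶜ) (nhds c) := by
  have h1 : HasDerivAt (fun p : ℝ => -(c*p)) (-c) 0 := by
    exact (((hasDerivAt_id (0:ℝ)).const_mul c).neg).congr_deriv (by simp)
  have hd : HasDerivAt (fun p : ℝ => 1 - Real.exp (-(c*p))) c 0 := by
    simpa using (h1.exp).const_sub 1
  have := hasDerivAt_iff_tendsto_slope.mp hd
  apply this.congr
  intro x
  rw [slope_def_field]
  simp

lemma tendsto_fv {a : ℝ} (ha0 : 0 < a) :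
    Filter.Tendsto (fv a) (nhdsWithin 0 (Set.Ioi 0)) (nhds a) := by
  have hA := slope_lim a
  have hB : Filter.Tendsto (fun p : ℝ => (1 - Real.exp (-p))/p)
      (nhdsWithin 0 {(0:ℝ)}ᶜ) (nhds 1) := by
    simpa using slope_lim 1
  have hdiv := hA.div hB one_ne_zero
  rw [div_one] at hdiv
  have hmono : nhdsWithin (0:ℝ) (Set.Ioi 0) ≤ nhdsWithin 0 {(0:ℝ)}ᶜ :=
    nhdsWithin_mono 0 (fun x hx => ne_of_gt hx)
  apply Filter.Tendsto.congr' _ (hdiv.mono_left hmono)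
  filter_upwards [self_mem_nhdsWithin] with x hx
  have hx0 : (x:ℝ) ≠ 0 := ne_of_gt hx
  rw [fv, if_neg hx0]
  simp only [Pi.div_apply]
  have hne : 1 - Real.exp (-x) ≠ 0 := ne_of_gt (one_sub_exp_neg_pos hx)
  field_simp

lemma continuousOn_fv {a : ℝ} (ha0 : 0 < a) : ContinuousOn (fv a) (Set.Ici 0) := by
  intro p hp
  rcases eq_or_lt_of_le (Set.mem_Ici.mp hp) with h | h
  · subst h
    rw [← Set.Ioi_insert, continuousWithinAt_insert_self]
    unfold ContinuousWithinAt
    rw [show fv a 0 = a from if_pos rfl]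
    exact tendsto_fv ha0
  · apply ContinuousAt.continuousWithinAt
    have hc : ContinuousAt (fun x : ℝ => (1 - Real.exp (-(a*x))) / (1 - Real.exp (-x))) p := by
      apply ContinuousAt.div
      · fun_prop
      · fun_prop
      · exact ne_of_gt (one_sub_exp_neg_pos h)
    apply hc.congr
    filter_upwards [Ioi_mem_nhds h] with x hx
    rw [fv, if_neg (ne_of_gt hx)]

lemma concave_log_fv {a : ℝ} (ha0 : 0 < a) (ha1 : a ≤ 1) :
    ConcaveOn ℝ (Set.Ici 0) (fun p => Real.log (fv a p)) := by
  apply concaveOn_of_hasDerivWithinAt2_nonpos (f' := fun p =>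
      a * Real.exp (-(a*p)) / (1 - Real.exp (-(a*p))) - Real.exp (-p) / (1 - Real.exp (-p)))
    (f'' := fun p => -(a^2 * Real.exp (-(a*p)) / (1 - Real.exp (-(a*p)))^2)
      - -(Real.exp (-p) / (1 - Real.exp (-p))^2))
    (convex_Ici 0)
  · exact (continuousOn_fv ha0).log (fun p hp => ne_of_gt (fv_pos ha0 hp))
  · rw [interior_Ici]
    intro p hp
    have hp' : (0:ℝ) < p := hp
    have h2 : HasDerivAt (fun x : ℝ => Real.log (1 - Real.exp (-x)))
        (Real.exp (-p) / (1 - Real.exp (-p))) p := by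
      simpa using hasDerivAt_log_one_sub_exp one_pos hp'
    have hG := (hasDerivAt_log_one_sub_exp ha0 hp').sub h2
    have heq : (fun x => Real.log (fv a x)) =ᶠ[nhds p]
        (fun x => Real.log (1 - Real.exp (-(a*x))) - Real.log (1 - Real.exp (-x))) := by
      filter_upwards [Ioi_mem_nhds hp'] with x hx
      have hx' : (0:ℝ) < x := hx
      rw [fv, if_neg (ne_of_gt hx'),
        Real.log_div (ne_of_gt (one_sub_exp_neg_pos (mul_pos ha0 hx')))
          (ne_of_gt (one_sub_exp_neg_pos hx'))]
    exact (hG.congr_of_eventuallyEq heq).hasDerivWithinAt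
  · rw [interior_Ici]
    intro p hp
    have hp' : (0:ℝ) < p := hp
    have h2 : HasDerivAt (fun x : ℝ => Real.exp (-x) / (1 - Real.exp (-x)))
        (-(Real.exp (-p) / (1 - Real.exp (-p))^2)) p := by
      simpa using hasDerivAt_ratio one_pos hp'
    exact ((hasDerivAt_ratio ha0 hp').sub h2).hasDerivWithinAt
  · rw [interior_Ici]
    intro p hp
    have := key_ineq ha0 ha1 (show (0:ℝ) < p from hp)
    simp only [neg_sub_neg]
    linarith


lemma fv_mul_ge {a u r : ℝ} (ha0 : 0 < a) (ha1 : a ≤ 1) (hu : 0 < u)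
    (hr0 : 0 ≤ r) (hru : r ≤ u) :
    a * fv a u ≤ fv a r * fv a (u - r) := by
  have hF := concave_log_fv ha0 ha1
  set L := fun p => Real.log (fv a p) with hL
  have h0 : (0:ℝ) ∈ Set.Ici (0:ℝ) := Set.self_mem_Ici
  have hU : u ∈ Set.Ici (0:ℝ) := le_of_lt hu
  set lam := r / u with hlam
  have hlam0 : 0 ≤ lam := div_nonneg hr0 (le_of_lt hu)
  have hlam1 : lam ≤ 1 := (div_le_one hu).mpr hru
  have e1 : (1 - lam) • (0:ℝ) + lam • u = r := by
    rw [smul_eq_mul, smul_eq_mul, mul_zero, zero_add, hlam,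
      div_mul_cancel₀ _ (ne_of_gt hu)]
  have e2 : lam • (0:ℝ) + (1 - lam) • u = u - r := by
    rw [smul_eq_mul, smul_eq_mul, mul_zero, zero_add, hlam]
    field_simp
  have h1 := hF.2 h0 hU (show (0:ℝ) ≤ 1 - lam by linarith) hlam0 (show (1 - lam) + lam = 1 by ring)
  rw [e1] at h1
  have h2 := hF.2 h0 hU hlam0 (show (0:ℝ) ≤ 1 - lam by linarith) (show lam + (1 - lam) = 1 by ring)
  rw [e2] at h2
  have hsumL : L 0 + L u ≤ L r + L (u - r) := by
    simp only [smul_eq_mul] at h1 h2; linarith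
  have hfe : ∀ p, 0 ≤ p → fv a p = Real.exp (L p) :=
    fun p hp => (Real.exp_log (fv_pos ha0 hp)).symm
  have hfv0 : fv a 0 = a := if_pos rfl
  calc a * fv a u = Real.exp (L 0 + L u) := by
        rw [Real.exp_add, ← hfe 0 le_rfl, ← hfe u (le_of_lt hu), hfv0]
    _ ≤ Real.exp (L r + L (u - r)) := Real.exp_le_exp.mpr hsumL
    _ = fv a r * fv a (u - r) := by
        rw [Real.exp_add, ← hfe r hr0, ← hfe (u - r) (by linarith)]

end QAux

theorem q_convolution_ge (s t u : ℝ) (hs : 0 ≤ s) (hst : s < t) (h1 : t - s < 1)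
    (hu : 0 < u) (r : ℝ) (hr : r ∈ Set.Icc 0 u) :
    (t - s) * q s t u ≤ q s t r * q s t (u - r) := by
  obtain ⟨hr0, hru⟩ := hr
  set a := t - s with ha
  have ha0 : 0 < a := sub_pos.mpr hst
  have hq : ∀ v : ℝ, 0 ≤ v → q s t v = Real.exp (-s * v) * QAux.fv a v := by
    intro v hv
    rcases eq_or_lt_of_le hv with h | h
    · rw [← h]; simp [q, QAux.fv]; exact ha.symm
    · rw [q, if_neg (ne_of_gt h), QAux.fv, if_neg (ne_of_gt h), mul_div_assoc']
      congr 1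
      rw [mul_sub, mul_one, ← Real.exp_add]
      have : -s * v + -(a * v) = -t * v := by rw [ha]; ring
      rw [this]
  have key := QAux.fv_mul_ge ha0 (le_of_lt h1) hu hr0 hru
  rw [hq u (le_of_lt hu), hq r hr0, hq (u - r) (by linarith)]
  have hexp : Real.exp (-s * r) * Real.exp (-s * (u - r)) = Real.exp (-s * u) := by
    rw [← Real.exp_add]; congr 1; ring
  calc a * (Real.exp (-s * u) * QAux.fv a u)
      = Real.exp (-s * u) * (a * QAux.fv a u) := by ring
    _ ≤ Real.exp (-s * u) * (QAux.fv a r * QAux.fv a (u - r)) :=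
        mul_le_mul_of_nonneg_left key (le_of_lt (Real.exp_pos _))
    _ = (Real.exp (-s * r) * QAux.fv a r) * (Real.exp (-s * (u - r)) * QAux.fv a (u - r)) := by
        rw [← hexp]; ring
end
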